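/- Let G=(V,E) be a finite graph without loops and q ∈ {2,3,…}. For every vector m=(m_e : e∈E) of non-negative integers, Σ_{σ∈{1,…,q}^V} Π_{e∈E} (q δ_e(σ) − 1)^{m_e} = q^{|V|} C(G_m;q), where δ_e(σ)=1 if the endvertices of e receive equal values under σ and 0 otherwise. -/

import Mathlib

open scoped BigOperators symmDiff Classical

noncomputable section FlowsAndFerromagnets

/-- The number of non-zero mod-`q` flows on the (multi)graph with vertex type `V`,
edge-index type `ι`, and a fixed orientation in which edge `i` leaves `s i` and
arrives at `t i`.  A mod-`q` flow assigns a value of `ZMod q` to every oriented edge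
so that, at every vertex, the total flow leaving equals the total flow arriving
(mod `q`); it is non-zero if no edge carries the value `0`. -/
def flowCount (V : Type) [Fintype V] [DecidableEq V] {ι : Type} [Fintype ι]
    (s t : ι → V) (q : ℕ) : ℕ :=
  Nat.card {f : ι → ZMod q //
    (∀ i, f i ≠ 0) ∧
    ∀ v : V, (∑ i, if s i = v then f i else 0) = (∑ i, if t i = v then f i else 0)}

/-- `C(G_m; q)`: the number of non-zero mod-`q` flows on the multigraph `G_m`
obtained from `G` (edges indexed by `E`, with endpoints `s e`, `t e`) by replacing
each edge `e` by `m e` parallel copies. -/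
def flowCountM {V E : Type} [Fintype V] [DecidableEq V] [Fintype E]
    (s t : E → V) (m : E → ℕ) (q : ℕ) : ℕ :=
  flowCount V (fun x : Σ e : E, Fin (m e) => s x.1) (fun x : Σ e : E, Fin (m e) => t x.1) q

/-- `C(G_m^{x,y}; q)`: the number of non-zero mod-`q` flows on the multigraph `G_m`
augmented by one extra edge joining `x` and `y`. -/
def flowCountMxy {V E : Type} [Fintype V] [DecidableEq V] [Fintype E]
    (s t : E → V) (m : E → ℕ) (x y : V) (q : ℕ) : ℕ :=
  flowCount V
    (fun o : Option (Σ e : E, Fin (m e)) => o.elim x (fun z => s z.1))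
    (fun o : Option (Σ e : E, Fin (m e)) => o.elim y (fun z => t z.1)) q

/-- The Poisson weight `∏_e e^{-λ_e} λ_e^{m_e} / m_e!` of a vector of edge multiplicities. -/
def poissonWt {E : Type} [Fintype E] (lam : E → ℝ) (m : E → ℕ) : ℝ :=
  ∏ e, Real.exp (-lam e) * lam e ^ (m e) / (Nat.factorial (m e))

/-- Expectation `E_λ(f(P))` with respect to independent Poisson multiplicities `P e`
of mean `lam e`. -/
def poissonExp {E : Type} [Fintype E] (lam : E → ℝ) (f : (E → ℕ) → ℝ) : ℝ :=
  ∑' m : E → ℕ, poissonWt lam m * f m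

/-- Probability `P_λ(P ∈ A)` with respect to independent Poisson multiplicities. -/
def poissonProb {E : Type} [Fintype E] (lam : E → ℝ) (A : (E → ℕ) → Prop) : ℝ :=
  ∑' m : E → ℕ, poissonWt lam m * (if A m then 1 else 0)

/-- Probability of an event for two independent families of independent Poisson
multiplicities. -/
def poissonProb2 {E : Type} [Fintype E] (lam : E → ℝ)
    (A : (E → ℕ) → (E → ℕ) → Prop) : ℝ :=
  ∑' m : E → ℕ, ∑' m' : E → ℕ,
    poissonWt lam m * poissonWt lam m' * (if A m m' then 1 else 0)

/-- The (unnormalised) Potts weight `exp(∑_e β J_e (q δ_e(σ) - 1))` of a spin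
configuration `σ`. -/
def pottsWt {V E : Type} [Fintype E] (s t : E → V) (q : ℕ) (β : ℝ) (J : E → ℝ)
    (σ : V → Fin q) : ℝ :=
  Real.exp (∑ e, β * J e * ((q : ℝ) * (if σ (s e) = σ (t e) then 1 else 0) - 1))

/-- The Potts partition function `Z_P`. -/
def pottsZ (V : Type) {E : Type} [Fintype V] [DecidableEq V] [Fintype E]
    (s t : E → V) (q : ℕ) (β : ℝ) (J : E → ℝ) : ℝ :=
  ∑ σ : V → Fin q, pottsWt s t q β J σ

/-- The Potts two-point function `σ(x,y) = ∑_σ (q δ_{σ_x,σ_y} - 1) π(σ)`. -/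
def pottsTwoPoint {V E : Type} [Fintype V] [DecidableEq V] [Fintype E]
    (s t : E → V) (q : ℕ) (β : ℝ) (J : E → ℝ) (x y : V) : ℝ :=
  (∑ σ : V → Fin q, ((q : ℝ) * (if σ x = σ y then 1 else 0) - 1) * pottsWt s t q β J σ)
    / pottsZ V s t q β J

/-- The degree of the vertex `v` in the multigraph `G_m`. -/
def mDeg {V E : Type} [Fintype E] [DecidableEq V] (s t : E → V) (m : E → ℕ) (v : V) : ℕ :=
  ∑ e, m e * ((if s e = v then 1 else 0) + (if t e = v then 1 else 0))

/-- The multigraph `G_m` is even: every vertex has even degree. -/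
def IsEvenM {V E : Type} [Fintype E] [DecidableEq V] (s t : E → V) (m : E → ℕ) : Prop :=
  ∀ v : V, Even (mDeg s t m v)

/-- The multigraph `G_m^{x,y}` (with one extra edge joining `x` and `y`) is even. -/
def IsEvenMxy {V E : Type} [Fintype E] [DecidableEq V] (s t : E → V) (m : E → ℕ)
    (x y : V) : Prop :=
  ∀ v : V, Even (mDeg s t m v + (if v = x then 1 else 0) + (if v = y then 1 else 0))

/-- The source set `∂m` of a vector of multiplicities: the set of vertices of odd
degree in `G_m`. -/
def sources {V E : Type} [Fintype E] [DecidableEq V] (s t : E → V) (m : E → ℕ) : Set V :=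
  {v : V | Odd (mDeg s t m v)}

/-- The simple graph on `V` induced by the edges `e` satisfying `pred e`. -/
def openGraph {V E : Type} (s t : E → V) (pred : E → Prop) : SimpleGraph V :=
  SimpleGraph.fromRel (fun a b => ∃ e, pred e ∧ s e = a ∧ t e = b)

/-- `x ↔ y in m`: `x` and `y` lie in the same component of `(V, {e : m e ≥ 1})`. -/
def ConnectedIn {V E : Type} (s t : E → V) (m : E → ℕ) (x y : V) : Prop :=
  (openGraph s t fun e => m e ≠ 0).Reachable x y

/-- `x ↔ y` in the percolation configuration `ω`. -/
def ConnectedInB {V E : Type} (s t : E → V) (ω : E → Bool) (x y : V) : Prop :=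
  (openGraph s t fun e => ω e = true).Reachable x y

/-- The number of connected components of the graph `(V, {e : pred e})`
(isolated vertices count). -/
def numComp {V E : Type} [Fintype V] (s t : E → V) (pred : E → Prop) : ℕ :=
  Nat.card (openGraph s t pred).ConnectedComponent

/-- Product (percolation) weight of a configuration, with edge densities `p`. -/
def percWt {E : Type} [Fintype E] (p : E → ℝ) (ω : E → Bool) : ℝ :=
  ∏ e, if ω e then p e else 1 - p e

/-- Random-cluster weight of the configuration `ω`. -/
def rcWt {V E : Type} [Fintype V] [Fintype E] (s t : E → V) (p : E → ℝ) (q : ℝ)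
    (ω : E → Bool) : ℝ :=
  percWt p ω * q ^ numComp s t (fun e => ω e = true)

/-- Random-cluster probability `φ_{p,q}(A)` of an event `A`. -/
def rcProb {V E : Type} [Fintype V] [Fintype E] (s t : E → V) (p : E → ℝ) (q : ℝ)
    (A : (E → Bool) → Prop) : ℝ :=
  (∑ ω : E → Bool, if A ω then rcWt s t p q ω else 0) / (∑ ω : E → Bool, rcWt s t p q ω)

/-- The Whitney rank-generating function `W(u,v) = ∑_{F' ⊆ F} u^{r(F')} v^{c(F')}`
of the multigraph with vertex type `V` and edge-index type `ι`, where
`r(F') = |V| - k(F')` and `c(F') = |F'| - |V| + k(F')`. -/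
def whitney (V : Type) [Fintype V] {ι : Type} [Fintype ι] (s t : ι → V) (u v : ℝ) : ℝ :=
  ∑ F : Finset ι,
    u ^ (Fintype.card V - numComp s t (· ∈ F)) *
      v ^ (F.card - (Fintype.card V - numComp s t (· ∈ F)))

/-- `F_q(G_m) = (-1)^{|edges| + |V| - 1} W_{G_m}(-1, -q)`, a real-`q` version of the
flow polynomial of the multigraph `G_m`. -/
def flowPolyW {V E : Type} [Fintype V] [Fintype E] (s t : E → V) (q : ℝ) (m : E → ℕ) : ℝ :=
  (-1 : ℝ) ^ ((∑ e, m e) + Fintype.card V - 1) *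
    whitney V (fun x : Σ e : E, Fin (m e) => s x.1) (fun x : Σ e : E, Fin (m e) => t x.1)
      (-1) (-q)

/-- `F_q(G_m^{x,y})`: as `flowPolyW`, for the multigraph `G_m` with one extra edge
joining `x` and `y`. -/
def flowPolyWxy {V E : Type} [Fintype V] [Fintype E] (s t : E → V) (q : ℝ) (m : E → ℕ)
    (x y : V) : ℝ :=
  (-1 : ℝ) ^ (((∑ e, m e) + 1) + Fintype.card V - 1) *
    whitney V (fun o : Option (Σ e : E, Fin (m e)) => o.elim x (fun z => s z.1))
      (fun o : Option (Σ e : E, Fin (m e)) => o.elim y (fun z => t z.1)) (-1) (-q)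

end FlowsAndFerromagnets

lemma addChar_sum' {ι A M : Type*} [AddCommMonoid A] [CommMonoid M] (ψ : AddChar A M)
    (s : Finset ι) (g : ι → A) : ψ (∑ i ∈ s, g i) = ∏ i ∈ s, ψ (g i) := by
  classical
  induction s using Finset.induction with
  | empty => simp
  | @insert a s h ih => rw [Finset.sum_insert h, Finset.prod_insert h, ψ.map_add_eq_mul, ih]

lemma key_complex (V ι : Type) [Fintype V] [DecidableEq V] [Fintype ι]
    (s t : ι → V) (q : ℕ) [NeZero q] (hq : 2 ≤ q) :
    (∑ σ : V → ZMod q, ∏ i, ((q : ℂ) * (if σ (s i) = σ (t i) then 1 else 0) - 1))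
      = (q : ℂ) ^ (Fintype.card V) *
        ((Finset.univ.filter (fun f : ι → ZMod q =>
          (∀ i, f i ≠ 0) ∧ ∀ v : V, (∑ i, if s i = v then f i else 0)
              = (∑ i, if t i = v then f i else 0))).card : ℂ) := by
  classical
  have hq0 : (q : ℂ) ≠ 0 := by exact_mod_cast (by omega : q ≠ 0)
  -- the primitive additive character
  obtain hζ := Complex.isPrimitiveRoot_exp q (by omega)
  set ζ : ℂ := Complex.exp (2 * Real.pi * Complex.I / q) with hζdef
  have hζ1 : ζ ^ q = 1 := hζ.pow_eq_one
  set ψ : AddChar (ZMod q) ℂ := AddChar.zmodChar q hζ1 with hψdef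
  have hprim : ψ.IsPrimitive := AddChar.zmodChar_primitive_of_primitive_root q hζ
  have hsum : ∀ d : ZMod q, ∑ a : ZMod q, ψ (a * d) = if d = 0 then (q : ℂ) else 0 := by
    intro d
    rw [AddChar.sum_mulShift d hprim, ZMod.card]
    split_ifs <;> simp
  -- character expansion of one factor
  have hfac : ∀ (σ : V → ZMod q) (i : ι),
      ((q : ℂ) * (if σ (s i) = σ (t i) then 1 else 0) - 1)
        = ∑ a ∈ Finset.univ.erase (0 : ZMod q), ψ (a * (σ (s i) - σ (t i))) := by
    intro σ i
    have h0 : (0 : ZMod q) ∈ (Finset.univ : Finset (ZMod q)) := Finset.mem_univ _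
    have := Finset.add_sum_erase Finset.univ (fun a : ZMod q => ψ (a * (σ (s i) - σ (t i)))) h0
    rw [hsum] at this
    simp only [zero_mul, AddChar.map_zero_eq_one] at this
    have h2 : (σ (s i) - σ (t i) = 0) ↔ (σ (s i) = σ (t i)) := sub_eq_zero
    rw [if_congr h2 rfl rfl] at this
    split_ifs at this ⊢ with h
    · rw [mul_one]; linear_combination -this
    · rw [mul_zero]; linear_combination -this
  set S : Finset (ZMod q) := Finset.univ.erase 0 with hS
  set c : (ι → ZMod q) → V → ZMod q := fun f v =>
    (∑ i, if s i = v then f i else 0) - (∑ i, if t i = v then f i else 0) with hc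
  have hre : ∀ (σ : V → ZMod q) (f : ι → ZMod q),
      ∑ i, f i * (σ (s i) - σ (t i)) = ∑ v, σ v * c f v := by
    intro σ f
    simp only [hc, mul_sub, Finset.mul_sum, Finset.sum_sub_distrib, mul_ite, mul_zero]
    rw [Finset.sum_comm (γ := V) (f := fun v i => if s i = v then σ v * f i else 0),
        Finset.sum_comm (γ := V) (f := fun v i => if t i = v then σ v * f i else 0)]
    simp only [Finset.sum_ite_eq, Finset.mem_univ, if_true]
    congr 1 <;> exact Finset.sum_congr rfl fun i _ => mul_comm _ _
  have hflow : ∀ f : ι → ZMod q,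
      ∑ σ : V → ZMod q, ∏ i, ψ (f i * (σ (s i) - σ (t i)))
        = if (∀ v, c f v = 0) then (q : ℂ) ^ Fintype.card V else 0 := by
    intro f
    have h1 : ∀ σ : V → ZMod q,
        ∏ i, ψ (f i * (σ (s i) - σ (t i))) = ∏ v, ψ (σ v * c f v) := by
      intro σ
      rw [← addChar_sum' ψ Finset.univ, ← addChar_sum' ψ Finset.univ, hre]
    simp only [h1]
    have h2 : ∑ σ : V → ZMod q, ∏ v, ψ (σ v * c f v)
        = ∏ v, ∑ x : ZMod q, ψ (x * c f v) := by
      rw [← Finset.sum_prod_piFinset (Finset.univ : Finset (ZMod q))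
        (fun v x => ψ (x * c f v))]
      apply Finset.sum_congr
      · rw [Fintype.piFinset_univ]
      · intros; rfl
    rw [h2]
    simp only [hsum]
    by_cases h : ∀ v, c f v = 0
    · rw [if_pos h]
      rw [Finset.prod_congr rfl fun v _ => if_pos (h v), Finset.prod_const,
        Finset.card_univ]
    · rw [if_neg h]
      obtain ⟨v, hv⟩ := not_forall.mp h
      exact Finset.prod_eq_zero (Finset.mem_univ v) (if_neg hv)
  calc
    ∑ σ : V → ZMod q, ∏ i, ((q : ℂ) * (if σ (s i) = σ (t i) then 1 else 0) - 1)
        = ∑ σ : V → ZMod q, ∑ f ∈ Fintype.piFinset (fun _ : ι => S),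
            ∏ i, ψ (f i * (σ (s i) - σ (t i))) := by
          refine Finset.sum_congr rfl fun σ _ => ?_
          rw [Finset.prod_congr rfl fun i _ => hfac σ i]
          exact Finset.prod_univ_sum _ _
    _ = ∑ f ∈ Fintype.piFinset (fun _ : ι => S),
          ∑ σ : V → ZMod q, ∏ i, ψ (f i * (σ (s i) - σ (t i))) := Finset.sum_comm
    _ = ∑ f ∈ Fintype.piFinset (fun _ : ι => S),
          (if (∀ v, c f v = 0) then (q : ℂ) ^ Fintype.card V else 0) :=
        Finset.sum_congr rfl fun f _ => hflow f
    _ = (q : ℂ) ^ (Fintype.card V) *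
        ((Finset.univ.filter (fun f : ι → ZMod q =>
          (∀ i, f i ≠ 0) ∧ ∀ v : V, (∑ i, if s i = v then f i else 0)
              = (∑ i, if t i = v then f i else 0))).card : ℂ) := by
      have hset : (Fintype.piFinset fun _ : ι => S).filter (fun f => ∀ v, c f v = 0)
          = Finset.univ.filter (fun f : ι → ZMod q =>
            (∀ i, f i ≠ 0) ∧ ∀ v : V, (∑ i, if s i = v then f i else 0)
                = (∑ i, if t i = v then f i else 0)) := by
        ext f
        simp only [Finset.mem_filter, Fintype.mem_piFinset, hS, Finset.mem_erase,
          Finset.mem_univ, and_true, true_and, hc, sub_eq_zero]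
      rw [← Finset.sum_filter, hset, Finset.sum_const, nsmul_eq_mul, mul_comm]

private theorem potts_aux
    (V E : Type) [Fintype V] [DecidableEq V] [Fintype E]
    (s t : E → V) (hloop : ∀ e, s e ≠ t e)
    (q : ℕ) (hq : 2 ≤ q) (m : E → ℕ) :
    (∑ σ : V → Fin q, ∏ e, ((q : ℤ) * (if σ (s e) = σ (t e) then 1 else 0) - 1) ^ (m e))
      = (q : ℤ) ^ (Fintype.card V) * (Nat.card {f : (Σ e : E, Fin (m e)) → ZMod q //
          (∀ i, f i ≠ 0) ∧
          ∀ v : V, (∑ i, if s i.1 = v then f i else 0) = (∑ i, if t i.1 = v then f i else 0)} : ℤ) := by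
  classical
  haveI : NeZero q := ⟨by omega⟩
  obtain e := Fintype.equivOfCardEq (α := Fin q) (β := ZMod q) (by simp [ZMod.card])
  have hcount : ((Nat.card {f : (Σ e : E, Fin (m e)) → ZMod q //
      (∀ i, f i ≠ 0) ∧
      ∀ v : V, (∑ i, if s i.1 = v then f i else 0) = (∑ i, if t i.1 = v then f i else 0)}) : ℂ) =
      ((Finset.univ.filter (fun f : (Σ e : E, Fin (m e)) → ZMod q =>
        (∀ i, f i ≠ 0) ∧ ∀ v : V, (∑ i, if s i.1 = v then f i else 0)
            = (∑ i, if t i.1 = v then f i else 0))).card : ℂ) := by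
    rw [Nat.card_eq_fintype_card, Fintype.card_subtype]
  have key := key_complex V (Σ e : E, Fin (m e)) (fun x => s x.1) (fun x => t x.1) q hq
  have hL : ((∑ σ : V → Fin q, ∏ e', ((q : ℤ) * (if σ (s e') = σ (t e') then 1 else 0) - 1) ^ (m e') : ℤ) : ℂ)
      = ∑ σ : V → ZMod q, ∏ i : Σ e : E, Fin (m e),
          ((q : ℂ) * (if σ (s i.1) = σ (t i.1) then 1 else 0) - 1) := by
    push_cast [apply_ite (fun x : ℤ => (x : ℂ))]
    rw [← Equiv.sum_comp (Equiv.arrowCongr (Equiv.refl V) e)]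
    apply Finset.sum_congr rfl
    intro σ _
    simp only [Equiv.arrowCongr_apply, Function.comp_apply, Equiv.refl_symm, Equiv.refl_apply,
      EmbeddingLike.apply_eq_iff_eq]
    rw [← Finset.univ_sigma_univ, Finset.prod_sigma]
    apply Finset.prod_congr rfl
    intro e' _
    simp [Finset.prod_const]
  have hfin : ((∑ σ : V → Fin q, ∏ e', ((q : ℤ) * (if σ (s e') = σ (t e') then 1 else 0) - 1) ^ (m e') : ℤ) : ℂ)
      = (((q : ℤ) ^ (Fintype.card V) * (Nat.card {f : (Σ e : E, Fin (m e)) → ZMod q //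
          (∀ i, f i ≠ 0) ∧
          ∀ v : V, (∑ i, if s i.1 = v then f i else 0) = (∑ i, if t i.1 = v then f i else 0)} : ℤ) : ℤ) : ℂ) := by
    rw [hL, key]
    push_cast
    rw [hcount]
    congr!
  exact_mod_cast hfin

/-- For every vector `m` of edge multiplicities,
`∑_{σ ∈ {1,…,q}^V} ∏_{e ∈ E} (q δ_e(σ) - 1)^{m_e} = q^{|V|} C(G_m; q)`. -/
theorem potts_product_sum_eq_flow_count
    (V E : Type) [Fintype V] [DecidableEq V] [Fintype E]
    (s t : E → V) (hloop : ∀ e, s e ≠ t e)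
    (q : ℕ) (hq : 2 ≤ q) (m : E → ℕ) :
    (∑ σ : V → Fin q, ∏ e, ((q : ℤ) * (if σ (s e) = σ (t e) then 1 else 0) - 1) ^ (m e))
      = (q : ℤ) ^ (Fintype.card V) * (flowCountM s t m q : ℤ) := by
  rw [flowCountM, flowCount]
  exact potts_aux V E s t hloop q hq m
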